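/- Let q be a prime number. Then every star flock of PG(3,q) whose critical cone is wide is a linear flock; that is, if F(f,g,h) is a flock whose planes all pass through a common point and whose critical cone is wide, then all its planes contain a common line. -/

import Mathlib

/-- The carrier of the critical cone of the flock `F(f,g,h)`, viewed inside `PG(2,q)`
(the plane `x₃ = 0`): the set of points `(a:b:c)` for which `t ↦ a·f(t)+b·g(t)+c·h(t)`
is a bijection of `GF(q)`. -/
def carrierSet (F : Type) [Field F] [Fintype F] (f g h : F → F) :
    Set (Projectivization F (Fin 3 → F)) :=
  {P | Function.Bijective (fun t => P.rep 0 * f t + P.rep 1 * g t + P.rep 2 * h t)}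

/-- `widthAt F S P` is `w_S(P)`: the number of lines of `PG(2,q)` through the point `P`
which contain a point of `S` (lines represented dually as points of `PG(2,q)`, a line
`L` passing through `Q` iff `L₀Q₀ + L₁Q₁ + L₂Q₂ = 0`). -/
noncomputable def widthAt (F : Type) [Field F] [Fintype F]
    (S : Set (Projectivization F (Fin 3 → F))) (P : Projectivization F (Fin 3 → F)) : ℕ :=
  Nat.card {L : Projectivization F (Fin 3 → F) |
    (L.rep 0 * P.rep 0 + L.rep 1 * P.rep 1 + L.rep 2 * P.rep 2 = 0) ∧
    ∃ Q ∈ S, L.rep 0 * Q.rep 0 + L.rep 1 * Q.rep 1 + L.rep 2 * Q.rep 2 = 0}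

/-- A set `S` of points of `PG(2,q)` is wide when its width `W_S = min_P w_S(P)` is at
least `⌊(q+2)/2⌋`. -/
def IsWide (F : Type) [Field F] [Fintype F]
    (S : Set (Projectivization F (Fin 3 → F))) : Prop :=
  ∀ P : Projectivization F (Fin 3 → F), (Fintype.card F + 2) / 2 ≤ widthAt F S P

section AuxPG

open Finset Polynomial


variable {F : Type} [Field F] [Fintype F]

lemma my_sum_pow_eq_zero (m : ℕ) (hm : m ≠ Fintype.card F - 1)
    (hm2 : m < 2 * Fintype.card F - 2) : ∑ x : F, x ^ m = 0 := by
  rcases lt_or_ge m (Fintype.card F - 1) with hlt | hge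
  · exact FiniteField.sum_pow_lt_card_sub_one (K:=F) m hlt
  · have hcard : 2 ≤ Fintype.card F := Fintype.one_lt_card
    have hgt : Fintype.card F - 1 < m := lt_of_le_of_ne hge (Ne.symm hm)
    set r := m - (Fintype.card F - 1) with hr
    have hr1 : 1 ≤ r := by omega
    have hr2 : r < Fintype.card F - 1 := by omega
    have : ∀ x : F, x ^ m = x ^ r := by
      intro x
      by_cases hx : x = 0
      · subst hx; rw [zero_pow (by omega), zero_pow (by omega)]
      · have hm' : m = (Fintype.card F - 1) + r := by omega
        rw [hm', pow_add, FiniteField.pow_card_sub_one_eq_one x hx, one_mul]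
    rw [Finset.sum_congr rfl fun x _ => this x]
    exact FiniteField.sum_pow_lt_card_sub_one (K:=F) r hr2

lemma my_sum_pow_card_sub_one : ∑ x : F, x ^ (Fintype.card F - 1) = -1 := by
  classical
  have hcard : 2 ≤ Fintype.card F := Fintype.one_lt_card
  have : ∀ x : F, x ^ (Fintype.card F - 1) = if x = 0 then 0 else 1 := by
    intro x
    by_cases hx : x = 0
    · simp [hx, zero_pow (by omega : Fintype.card F - 1 ≠ 0)]
    · simp [hx, FiniteField.pow_card_sub_one_eq_one x hx]
  rw [Finset.sum_congr rfl fun x _ => this x, Finset.sum_ite]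
  simp only [Finset.sum_const_zero, Finset.sum_const, nsmul_one, zero_add]
  have hfilt : (Finset.univ.filter (fun x : F => ¬ x = 0)).card = Fintype.card F - 1 := by
    rw [Finset.filter_not, Finset.card_sdiff_of_subset (by simp)]
    simp [Finset.card_univ, Finset.filter_eq']
    congr 1
    rw [Finset.filter_eq' Finset.univ (0:F)]
    simp
  rw [hfilt, Nat.cast_sub (by omega), FiniteField.cast_card_eq_zero, Nat.cast_one, zero_sub]

lemma my_sum_eval (P : F[X]) (hdeg : P.natDegree < 2 * Fintype.card F - 2) :
    ∑ x : F, P.eval x = -(P.coeff (Fintype.card F - 1)) := by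
  have hcard : 2 ≤ Fintype.card F := Fintype.one_lt_card
  have h1 : ∀ x : F, P.eval x = ∑ i ∈ Finset.range (2 * Fintype.card F - 2), P.coeff i * x ^ i :=
    fun x => P.eval_eq_sum_range' hdeg x
  rw [Finset.sum_congr rfl fun x _ => h1 x, Finset.sum_comm]
  rw [Finset.sum_eq_single (Fintype.card F - 1)]
  · rw [← Finset.mul_sum, my_sum_pow_card_sub_one, mul_neg_one]
  · intro i hi hne
    rw [← Finset.mul_sum, my_sum_pow_eq_zero i hne (Finset.mem_range.mp hi), mul_zero]
  · intro hmem
    exact absurd (Finset.mem_range.mpr (by omega)) hmem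

lemma my_charP (hq : (Fintype.card F).Prime) : CharP F (Fintype.card F) := by
  have h1 : CharP F (ringChar F) := ringChar.charP F
  have h2 : (ringChar F).Prime := CharP.char_is_prime F (ringChar F)
  have h3 : ringChar F ∣ Fintype.card F := by
    rw [← CharP.cast_eq_zero_iff F (ringChar F)]
    exact FiniteField.cast_card_eq_zero F
  have h4 : ringChar F = Fintype.card F :=
    ((Nat.prime_dvd_prime_iff_eq h2 hq).mp h3)
  rwa [h4] at h1

lemma my_choose_ne_zero (hq : (Fintype.card F).Prime) {i j : ℕ} (hij : i ≤ j)
    (hj : j < Fintype.card F) : (Nat.choose j i : F) ≠ 0 := by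
  have hch := my_charP (F := F) hq
  intro h
  rw [CharP.cast_eq_zero_iff F (Fintype.card F)] at h
  have hdvd : j.choose i ∣ Nat.factorial j :=
    ⟨Nat.factorial i * Nat.factorial (j - i), by
      rw [← Nat.choose_mul_factorial_mul_factorial hij]; ring⟩
  have : Fintype.card F ∣ Nat.factorial j := h.trans hdvd
  exact absurd (hq.dvd_factorial.mp this) (by omega)

lemma my_moments (hq : (Fintype.card F).Prime) (s : ℕ) (hs : Fintype.card F = 2 * s + 1)
    (g0 : F → F) (Cs : Finset F) (hcard : s ≤ Cs.card)
    (hC : ∀ c ∈ Cs, Function.Bijective (fun x => g0 x + c * x)) :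
    ∀ i l : ℕ, 1 ≤ i + l → i + l ≤ s → ∑ x : F, x ^ i * g0 x ^ l = 0 := by
  intro i l hil1 hil2
  set j := i + l with hj
  have hs1 : 1 ≤ s := le_trans hil1 hil2
  set coef : ℕ → F := fun k => (Nat.choose j k : F) * ∑ x : F, x ^ k * g0 x ^ (j - k) with hcoef
  set Pj : F[X] := ∑ k ∈ Finset.range (j + 1), Polynomial.C (coef k) * X ^ k with hPj
  have heval : ∀ c : F, Pj.eval c = ∑ x : F, (g0 x + c * x) ^ j := by
    intro c
    rw [hPj, Polynomial.eval_finset_sum]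
    simp only [Polynomial.eval_mul, Polynomial.eval_C, Polynomial.eval_pow, Polynomial.eval_X]
    have : ∀ x : F, (g0 x + c * x) ^ j
        = ∑ k ∈ Finset.range (j + 1), (c ^ k * x ^ k * g0 x ^ (j - k)) * (Nat.choose j k : F) := by
      intro x
      rw [add_comm (g0 x) (c * x), add_pow]
      exact Finset.sum_congr rfl fun k _ => by ring
    rw [Finset.sum_congr rfl fun x _ => this x, Finset.sum_comm]
    refine Finset.sum_congr rfl fun k _ => ?_
    rw [hcoef]
    simp only []
    rw [Finset.mul_sum, Finset.sum_mul]
    refine Finset.sum_congr rfl fun x _ => by ring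
  have hroot : ∀ c ∈ Cs, Pj.eval c = 0 := by
    intro c hc
    rw [heval c]
    have hb : ∑ x : F, (g0 x + c * x) ^ j = ∑ y : F, y ^ j :=
      Fintype.sum_bijective _ (hC c hc) _ _ (fun x => rfl)
    rw [hb]
    exact FiniteField.sum_pow_lt_card_sub_one (K := F) j (by omega)
  have hcoeff : ∀ m, Pj.coeff m = if m ∈ Finset.range (j + 1) then coef m else 0 := by
    intro m
    rw [hPj, Polynomial.finset_sum_coeff]
    simp only [Polynomial.coeff_C_mul, Polynomial.coeff_X_pow]
    rw [Finset.sum_congr rfl (fun k _ => by rw [mul_ite, mul_one, mul_zero]),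
      Finset.sum_ite_eq (Finset.range (j + 1)) m coef]
  have hcoefj : coef j = 0 := by
    rw [hcoef]
    simp only [Nat.choose_self, Nat.cast_one, one_mul, Nat.sub_self, pow_zero, mul_one]
    exact FiniteField.sum_pow_lt_card_sub_one (K := F) j (by omega)
  have hdegle : Pj.natDegree ≤ j := by
    refine le_trans (Polynomial.natDegree_sum_le _ _) ?_
    simp only [Finset.fold_max_le]
    refine ⟨by omega, fun k hk => ?_⟩
    exact le_trans (Polynomial.natDegree_C_mul_le _ _)
      (by simpa using Nat.lt_succ_iff.mp (Finset.mem_range.mp hk))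
  have hPj0 : Pj = 0 := by
    by_contra hP
    have hne : Pj.natDegree ≠ j := by
      intro hEq
      apply hP
      rw [← Polynomial.leadingCoeff_eq_zero, Polynomial.leadingCoeff, hEq]
      rw [hcoeff j, if_pos (Finset.self_mem_range_succ j)]
      exact hcoefj
    exact hP (Polynomial.eq_zero_of_natDegree_lt_card_of_eval_eq_zero' Pj Cs hroot (by omega))
  have hc0 : coef i = 0 := by
    have := hcoeff i
    rw [hPj0] at this
    simp only [Polynomial.coeff_zero] at this
    rw [if_pos (Finset.mem_range.mpr (by omega))] at this
    exact this.symm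
  rw [hcoef] at hc0
  simp only [] at hc0
  have hl : j - i = l := by omega
  rw [hl] at hc0
  rcases mul_eq_zero.mp hc0 with h | h
  · exact absurd h (my_choose_ne_zero hq (by omega) (by omega))
  · exact h

lemma my_core (hq : (Fintype.card F).Prime) (s : ℕ) (hs : Fintype.card F = 2 * s + 1)
    (hs1 : 1 ≤ s) (g0 : F → F) (hg00 : g0 0 = 0) (Cs : Finset F) (hcard : s ≤ Cs.card)
    (hC : ∀ c ∈ Cs, Function.Bijective (fun x => g0 x + c * x)) :
    ∃ a : F, ∀ x, g0 x = a * x := by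
  classical
  have hmom := my_moments hq s hs g0 Cs hcard hC
  -- interpolate g0
  obtain ⟨G, hGdeg, hGeval⟩ : ∃ G : F[X], G.natDegree < Fintype.card F ∧ ∀ x, G.eval x = g0 x := by
    set G0 := Lagrange.interpolate Finset.univ id g0 with hG0def
    refine ⟨G0, ?_, ?_⟩
    · by_cases h0 : G0 = 0
      · rw [h0]; simpa using Fintype.card_pos
      · rw [Polynomial.natDegree_lt_iff_degree_lt h0]
        have := Lagrange.degree_interpolate_lt (s := (Finset.univ : Finset F)) g0
          (Set.injOn_of_injective Function.injective_id)
        rw [Finset.card_univ] at this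
        exact_mod_cast this
    · intro x
      exact Lagrange.eval_interpolate_at_node g0 (Set.injOn_of_injective Function.injective_id)
        (Finset.mem_univ x)
  -- Step A : natDegree G ≤ s
  have hstepA : G.natDegree ≤ s := by
    rw [Polynomial.natDegree_le_iff_coeff_eq_zero]
    intro m hm
    rcases lt_or_ge m (Fintype.card F) with hmlt | hmge
    · -- s < m ≤ 2s
      set i := 2 * s - m with hi
      have him : m + i = Fintype.card F - 1 := by omega
      have hsum : ∑ x : F, (X ^ i * G).eval x = 0 := by
        have : ∀ x : F, (X ^ i * G).eval x = x ^ i * g0 x ^ 1 := by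
          intro x; simp [hGeval x]
        rw [Finset.sum_congr rfl fun x _ => this x]
        exact hmom i 1 (by omega) (by omega)
      have hdeg2 : (X ^ i * G).natDegree < 2 * Fintype.card F - 2 := by
        refine lt_of_le_of_lt (Polynomial.natDegree_mul_le) ?_
        rw [Polynomial.natDegree_X_pow]
        omega
      have hse := my_sum_eval (X ^ i * G) hdeg2
      rw [hsum, ← him, Polynomial.coeff_X_pow_mul G i m] at hse
      exact neg_eq_zero.mp hse.symm
    · exact Polynomial.coeff_eq_zero_of_natDegree_lt (lt_of_lt_of_le hGdeg hmge)
  -- Step B : natDegree G ≤ 1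
  have hstepB : G.natDegree ≤ 1 := by
    by_contra hr
    push_neg at hr
    have hG0 : G ≠ 0 := fun h => by rw [h, Polynomial.natDegree_zero] at hr; omega
    obtain ⟨d, hd⟩ : ∃ d, G.natDegree = d + 1 := ⟨G.natDegree - 1, by omega⟩
    have hd1 : 1 ≤ d := by omega
    have hds : d ≤ s - 1 := by omega
    obtain ⟨i, m, him, hmlt⟩ : ∃ i m, d * i + m = s + d - 1 ∧ m < d :=
      ⟨(s + d - 1) / d, (s + d - 1) % d, Nat.div_add_mod _ _, Nat.mod_lt _ (by omega)⟩
    have hcomm : i * d = d * i := by ring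
    have hid_ge : s ≤ i * d := by omega
    have hid_le : i * d ≤ s + d - 1 := by omega
    have hi1 : 1 ≤ i := by
      rcases Nat.eq_zero_or_pos i with h0 | h1
      · rw [h0] at hid_ge; simp at hid_ge; omega
      · exact h1
    have hile : i ≤ s - d + 1 := by
      have hkey : s + d - 1 < (s - d + 2) * d := by
        obtain ⟨e, he⟩ : ∃ e, s = d + e := ⟨s - d, by omega⟩
        have he1 : 1 ≤ e := by omega
        have h3 : e ≤ e * d := Nat.le_mul_of_pos_right e (by omega)
        have h4 : (s - d + 2) * d = e * d + 2 * d := by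
          have h5 : s - d + 2 = e + 2 := by omega
          rw [h5]; ring
        omega
      have hlt : i * d < (s - d + 2) * d := lt_of_le_of_lt hid_le hkey
      have := lt_of_mul_lt_mul_right hlt (Nat.zero_le d)
      omega
    have hii : i * d + i ≤ 2 * s := by omega
    set jj := 2 * s - (i * d + i) with hjj
    have hji : jj + (i * d + i) = 2 * s := by omega
    have hjis : jj + i ≤ s := by omega
    have hir : i * G.natDegree = i * d + i := by rw [hd]; ring
    -- the contradiction
    have hGne : G.leadingCoeff ≠ 0 := Polynomial.leadingCoeff_ne_zero.mpr hG0
    have hGine : G ^ i ≠ 0 := pow_ne_zero i hG0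
    have hXne : (X : F[X]) ^ jj ≠ 0 := pow_ne_zero jj Polynomial.X_ne_zero
    have hdegP : (X ^ jj * G ^ i).natDegree = Fintype.card F - 1 := by
      rw [Polynomial.natDegree_mul hXne hGine, Polynomial.natDegree_X_pow,
        Polynomial.natDegree_pow' (pow_ne_zero i hGne)]
      omega
    have hsum : ∑ x : F, (X ^ jj * G ^ i).eval x = 0 := by
      have hev : ∀ x : F, (X ^ jj * G ^ i).eval x = x ^ jj * g0 x ^ i := by
        intro x; simp [hGeval x]
      rw [Finset.sum_congr rfl fun x _ => hev x]
      exact hmom jj i (by omega) hjis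
    have hse := my_sum_eval (X ^ jj * G ^ i) (by rw [hdegP]; omega)
    rw [hsum] at hse
    have hlc : (X ^ jj * G ^ i).coeff (Fintype.card F - 1) = G.leadingCoeff ^ i := by
      rw [← hdegP, ← Polynomial.leadingCoeff, Polynomial.leadingCoeff_mul,
        Polynomial.leadingCoeff_X_pow, one_mul,
        Polynomial.leadingCoeff_pow' (pow_ne_zero i hGne)]
    rw [hlc] at hse
    exact (pow_ne_zero i hGne) (neg_eq_zero.mp hse.symm)
  -- conclude linearity
  refine ⟨G.coeff 1, fun x => ?_⟩
  have hG : G = Polynomial.C (G.coeff 1) * X + Polynomial.C (G.coeff 0) :=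
    Polynomial.eq_X_add_C_of_natDegree_le_one hstepB
  have hc0 : G.coeff 0 = 0 := by
    rw [Polynomial.coeff_zero_eq_eval_zero, hGeval 0, hg00]
  rw [← hGeval x, hG, hc0]
  simp

lemma my_bij_scale {k : F} (hk : k ≠ 0) {θ : F → F} (hθ : Function.Bijective θ) :
    Function.Bijective (fun t => k * θ t) := by
  have : (fun t => k * θ t) = (fun y => k * y) ∘ θ := rfl
  rw [this]
  exact (Equiv.mulLeft₀ k hk).bijective.comp hθ

lemma my_pairs_aux (hq : (Fintype.card F).Prime) (s : ℕ) (hs : Fintype.card F = 2 * s + 1)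
    (hs1 : 1 ≤ s) (φ ψ : F → F) (hφ0 : φ 0 = 0) (hψ0 : ψ 0 = 0)
    (ι : Type) [Fintype ι] (hcard : s + 1 ≤ Fintype.card ι)
    (A B : ι → F) (hbij : ∀ i, Function.Bijective (fun t => A i * φ t + B i * ψ t))
    (hnp : ∀ i j, A i * B j = A j * B i → i = j)
    (i0 : ι) (hA0 : A i0 ≠ 0) :
    ∃ γ δ : F, ¬(γ = 0 ∧ δ = 0) ∧ ∀ t, γ * φ t + δ * ψ t = 0 := by
  classical
  set α0 := A i0 with hα0
  set β0 := B i0 with hβ0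
  set θ0 : F → F := fun t => α0 * φ t + β0 * ψ t with hθ0
  have hθbij : Function.Bijective θ0 := hbij i0
  have hθ00 : θ0 0 = 0 := by rw [hθ0]; simp [hφ0, hψ0]
  set e := Equiv.ofBijective θ0 hθbij with he
  have hesymm0 : e.symm 0 = 0 := by
    have h1 : e 0 = 0 := hθ00
    nth_rewrite 1 [← h1]
    rw [Equiv.symm_apply_apply]
  set D : ι → F := fun i => B i * α0 - A i * β0 with hD
  have hDne : ∀ i, i ≠ i0 → D i ≠ 0 := by
    intro i hi hzero
    exact hi (hnp i i0 (by rw [hD] at hzero; simp only [] at hzero; linear_combination -hzero))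
  set g0 : F → F := fun x => ψ (e.symm x) with hg0
  have hg00 : g0 0 = 0 := by rw [hg0]; simp [hesymm0, hψ0]
  set sl : ι → F := fun i => A i / D i with hsl
  set Cs : Finset F := Finset.image sl (Finset.univ.erase i0) with hCs
  have hslinj : ∀ i ∈ Finset.univ.erase i0, ∀ j ∈ Finset.univ.erase i0, sl i = sl j → i = j := by
    intro i hi j hj hij
    have hiD := hDne i (Finset.ne_of_mem_erase hi)
    have hjD := hDne j (Finset.ne_of_mem_erase hj)
    rw [hsl] at hij
    simp only [] at hij
    have h2 : A i * D j = A j * D i := by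
      field_simp at hij
      linear_combination hij
    apply hnp
    have h3 : α0 * (A i * B j - A j * B i) = 0 := by
      rw [hD] at h2; simp only [] at h2; linear_combination h2
    rcases mul_eq_zero.mp h3 with h | h
    · exact absurd h hA0
    · linear_combination h
  have hCcard : s ≤ Cs.card := by
    rw [hCs, Finset.card_image_of_injOn hslinj, Finset.card_erase_of_mem (Finset.mem_univ i0),
      Finset.card_univ]
    omega
  have hCbij : ∀ c ∈ Cs, Function.Bijective (fun x => g0 x + c * x) := by
    intro c hc
    rw [hCs] at hc
    obtain ⟨i, hi, rfl⟩ := Finset.mem_image.mp hc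
    have hiD := hDne i (Finset.ne_of_mem_erase hi)
    have hkey : ∀ t, ψ t + sl i * θ0 t = (α0 / D i) * (A i * φ t + B i * ψ t) := by
      intro t
      rw [hsl, hθ0, hD]
      simp only []
      have hiD' : B i * α0 - A i * β0 ≠ 0 := hiD
      apply mul_left_cancel₀ hiD'
      field_simp
      ring
    have hb1 : Function.Bijective (fun t => ψ t + sl i * θ0 t) := by
      have : (fun t => ψ t + sl i * θ0 t) = fun t => (α0 / D i) * (A i * φ t + B i * ψ t) := by
        funext t; exact hkey t
      rw [this]
      exact my_bij_scale (div_ne_zero hA0 hiD) (hbij i)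
    have : (fun x => g0 x + sl i * x) = (fun t => ψ t + sl i * θ0 t) ∘ e.symm := by
      funext x
      simp only [Function.comp_apply, hg0]
      congr 1
      have : θ0 (e.symm x) = e (e.symm x) := rfl
      rw [this, Equiv.apply_symm_apply]
    rw [this]
    exact hb1.comp e.symm.bijective
  obtain ⟨a, ha⟩ := my_core hq s hs hs1 g0 hg00 Cs hCcard hCbij
  have hψθ : ∀ t, ψ t = a * θ0 t := by
    intro t
    have h1 : g0 (θ0 t) = ψ t := by
      rw [hg0]
      simp only []
      congr 1
      have : θ0 t = e t := rfl
      rw [this, Equiv.symm_apply_apply]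
    rw [← h1, ha (θ0 t)]
  refine ⟨a * α0, a * β0 - 1, ?_, ?_⟩
  · rintro ⟨h1, h2⟩
    have ha0 : a ≠ 0 := by
      intro h; rw [h] at h2; simp at h2
    exact hA0 (by
      have := mul_eq_zero.mp h1
      rcases this with h | h
      · exact absurd h ha0
      · exact h)
  · intro t
    have := hψθ t
    rw [hθ0] at this
    simp only [] at this
    linear_combination -this

lemma my_pairs (hq : (Fintype.card F).Prime) (s : ℕ) (hs : Fintype.card F = 2 * s + 1)
    (hs1 : 1 ≤ s) (φ ψ : F → F) (hφ0 : φ 0 = 0) (hψ0 : ψ 0 = 0)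
    (ι : Type) [Fintype ι] (hcard : s + 1 ≤ Fintype.card ι)
    (A B : ι → F) (hbij : ∀ i, Function.Bijective (fun t => A i * φ t + B i * ψ t))
    (hnp : ∀ i j, A i * B j = A j * B i → i = j) :
    ∃ γ δ : F, ¬(γ = 0 ∧ δ = 0) ∧ ∀ t, γ * φ t + δ * ψ t = 0 := by
  classical
  have hne : Nonempty ι := by
    rw [← Fintype.card_pos_iff]; omega
  obtain ⟨i0⟩ := hne
  have hp0 : ¬(A i0 = 0 ∧ B i0 = 0) := by
    rintro ⟨h1, h2⟩
    have := hbij i0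
    rw [h1, h2] at this
    simp only [zero_mul, zero_add] at this
    obtain ⟨t, ht⟩ := this.2 1
    exact absurd ht.symm one_ne_zero
  by_cases hA0 : A i0 ≠ 0
  · exact my_pairs_aux hq s hs hs1 φ ψ hφ0 hψ0 ι hcard A B hbij hnp i0 hA0
  · push_neg at hA0
    have hB0 : B i0 ≠ 0 := fun h => hp0 ⟨hA0, h⟩
    obtain ⟨γ, δ, hγδ, hlin⟩ := my_pairs_aux hq s hs hs1 ψ φ hψ0 hφ0 ι hcard B A
      (fun i => by have := hbij i; convert this using 2 with t; ring)
      (fun i j hij => hnp i j (by linear_combination -hij)) i0 hB0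
    exact ⟨δ, γ, fun ⟨h1, h2⟩ => hγδ ⟨h2, h1⟩, fun t => by linear_combination hlin t⟩

set_option linter.unusedSectionVars false

def dot3 (a b : Fin 3 → F) : F := a 0 * b 0 + a 1 * b 1 + a 2 * b 2

def cross3 (a b : Fin 3 → F) : Fin 3 → F :=
  ![a 1 * b 2 - a 2 * b 1, a 2 * b 0 - a 0 * b 2, a 0 * b 1 - a 1 * b 0]

lemma ne3 {a : Fin 3 → F} (ha : a ≠ 0) : a 0 ≠ 0 ∨ a 1 ≠ 0 ∨ a 2 ≠ 0 := by
  by_contra hcon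
  push_neg at hcon
  exact ha (by funext i; fin_cases i <;> simp [hcon.1, hcon.2.1, hcon.2.2])

lemma perp2 {a b w : Fin 3 → F} (hc : cross3 a b ≠ 0) (h1 : dot3 w a = 0) (h2 : dot3 w b = 0) :
    ∃ μ : F, w = μ • cross3 a b := by
  set c := cross3 a b with hcdef
  have hc0 : c 0 = a 1 * b 2 - a 2 * b 1 := rfl
  have hc1 : c 1 = a 2 * b 0 - a 0 * b 2 := rfl
  have hc2 : c 2 = a 0 * b 1 - a 1 * b 0 := rfl
  rw [dot3] at h1 h2
  have h01 : w 0 * c 1 = w 1 * c 0 := by rw [hc0, hc1]; linear_combination a 2 * h2 - b 2 * h1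
  have h02 : w 0 * c 2 = w 2 * c 0 := by rw [hc0, hc2]; linear_combination b 1 * h1 - a 1 * h2
  have h12 : w 1 * c 2 = w 2 * c 1 := by rw [hc1, hc2]; linear_combination a 0 * h2 - b 0 * h1
  rcases ne3 hc with hk | hk | hk
  · refine ⟨w 0 / c 0, ?_⟩
    have e0 : w 0 = w 0 / c 0 * c 0 := by field_simp
    have e1 : w 1 = w 0 / c 0 * c 1 := by field_simp; linear_combination -h01
    have e2 : w 2 = w 0 / c 0 * c 2 := by field_simp; linear_combination -h02
    funext i; fin_cases i
    · exact e0
    · exact e1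
    · exact e2
  · refine ⟨w 1 / c 1, ?_⟩
    have e0 : w 0 = w 1 / c 1 * c 0 := by field_simp; linear_combination h01
    have e1 : w 1 = w 1 / c 1 * c 1 := by field_simp
    have e2 : w 2 = w 1 / c 1 * c 2 := by field_simp; linear_combination -h12
    funext i; fin_cases i
    · exact e0
    · exact e1
    · exact e2
  · refine ⟨w 2 / c 2, ?_⟩
    have e0 : w 0 = w 2 / c 2 * c 0 := by field_simp; linear_combination h02
    have e1 : w 1 = w 2 / c 2 * c 1 := by field_simp; linear_combination h12
    have e2 : w 2 = w 2 / c 2 * c 2 := by field_simp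
    funext i; fin_cases i
    · exact e0
    · exact e1
    · exact e2

lemma indep_cross {a b : Fin 3 → F} (ha : a ≠ 0) (h : ∀ lam : F, b ≠ lam • a) :
    cross3 a b ≠ 0 := by
  intro hc
  have hm0 : a 1 * b 2 - a 2 * b 1 = 0 := congrFun hc 0
  have hm1 : a 2 * b 0 - a 0 * b 2 = 0 := congrFun hc 1
  have hm2 : a 0 * b 1 - a 1 * b 0 = 0 := congrFun hc 2
  rcases ne3 ha with hk | hk | hk
  · refine h (b 0 / a 0) ?_
    have e0 : b 0 = b 0 / a 0 * a 0 := by field_simp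
    have e1 : b 1 = b 0 / a 0 * a 1 := by field_simp; linear_combination hm2
    have e2 : b 2 = b 0 / a 0 * a 2 := by field_simp; linear_combination -hm1
    funext i; fin_cases i
    · exact e0
    · exact e1
    · exact e2
  · refine h (b 1 / a 1) ?_
    have e0 : b 0 = b 1 / a 1 * a 0 := by field_simp; linear_combination -hm2
    have e1 : b 1 = b 1 / a 1 * a 1 := by field_simp
    have e2 : b 2 = b 1 / a 1 * a 2 := by field_simp; linear_combination hm0
    funext i; fin_cases i
    · exact e0
    · exact e1
    · exact e2
  · refine h (b 2 / a 2) ?_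
    have e0 : b 0 = b 2 / a 2 * a 0 := by field_simp; linear_combination hm1
    have e1 : b 1 = b 2 / a 2 * a 1 := by field_simp; linear_combination -hm0
    have e2 : b 2 = b 2 / a 2 * a 2 := by field_simp
    funext i; fin_cases i
    · exact e0
    · exact e1
    · exact e2

lemma dual_basis {z1 z2 : Fin 3 → F} (hc : cross3 z1 z2 ≠ 0) (p q : F) :
    ∃ w : Fin 3 → F, dot3 w z1 = p ∧ dot3 w z2 = q := by
  rcases ne3 hc with hk | hk | hk
  · replace hk : z1 1 * z2 2 - z1 2 * z2 1 ≠ 0 := hk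
    refine ⟨![0, (p * z2 2 - q * z1 2) / (z1 1 * z2 2 - z1 2 * z2 1),
      (q * z1 1 - p * z2 1) / (z1 1 * z2 2 - z1 2 * z2 1)], ?_, ?_⟩ <;>
      · rw [dot3]; simp only [Matrix.cons_val_zero, Matrix.cons_val_one, Matrix.head_cons,
          Matrix.cons_val_two, Matrix.tail_cons]
        apply mul_left_cancel₀ hk
        field_simp
        ring
  · replace hk : z1 2 * z2 0 - z1 0 * z2 2 ≠ 0 := hk
    refine ⟨![(q * z1 2 - p * z2 2) / (z1 2 * z2 0 - z1 0 * z2 2), 0,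
      (p * z2 0 - q * z1 0) / (z1 2 * z2 0 - z1 0 * z2 2)], ?_, ?_⟩ <;>
      · rw [dot3]; simp only [Matrix.cons_val_zero, Matrix.cons_val_one, Matrix.head_cons,
          Matrix.cons_val_two, Matrix.tail_cons]
        apply mul_left_cancel₀ hk
        field_simp
        ring
  · replace hk : z1 0 * z2 1 - z1 1 * z2 0 ≠ 0 := hk
    refine ⟨![(p * z2 1 - q * z1 1) / (z1 0 * z2 1 - z1 1 * z2 0),
      (q * z1 0 - p * z2 0) / (z1 0 * z2 1 - z1 1 * z2 0), 0], ?_, ?_⟩ <;>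
      · rw [dot3]; simp only [Matrix.cons_val_zero, Matrix.cons_val_one, Matrix.head_cons,
          Matrix.cons_val_two, Matrix.tail_cons]
        apply mul_left_cancel₀ hk
        field_simp
        ring

lemma dot3_smul_left (k : F) (a b : Fin 3 → F) : dot3 (k • a) b = k * dot3 a b := by
  simp only [dot3, Pi.smul_apply, smul_eq_mul]; ring

lemma dot3_smul_right (k : F) (a b : Fin 3 → F) : dot3 a (k • b) = k * dot3 a b := by
  simp only [dot3, Pi.smul_apply, smul_eq_mul]; ring

lemma dot3_sub_left (a a' b : Fin 3 → F) : dot3 (a - a') b = dot3 a b - dot3 a' b := by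
  simp only [dot3, Pi.sub_apply]; ring

lemma dot3_sub_right (a b b' : Fin 3 → F) : dot3 a (b - b') = dot3 a b - dot3 a b' := by
  simp only [dot3, Pi.sub_apply]; ring

lemma my_case1 (f g h : F → F)
    (hinj : Function.Injective (fun t => (f t, g t, h t)))
    (hall : ∀ t s : F, f t * g s - f s * g t = 0 ∧ f t * h s - f s * h t = 0 ∧
      g t * h s - g s * h t = 0) :
    ∃ v w : Fin 4 → F, LinearIndependent F ![v, w] ∧
      ∀ t : F, (f t * v 0 + g t * v 1 + h t * v 2 - v 3 = 0) ∧
               (f t * w 0 + g t * w 1 + h t * w 2 - w 3 = 0) := by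
  obtain ⟨t0, ht0⟩ : ∃ t : F, f t ≠ 0 ∨ g t ≠ 0 ∨ h t ≠ 0 := by
    by_contra hcon
    push_neg at hcon
    have h01 : ((0 : F), (0 : F), (0 : F)) = (f 1, g 1, h 1) := by
      obtain ⟨h1, h2, h3⟩ := hcon 1
      rw [h1, h2, h3]
    have h00 : ((0 : F), (0 : F), (0 : F)) = (f 0, g 0, h 0) := by
      obtain ⟨h1, h2, h3⟩ := hcon 0
      rw [h1, h2, h3]
    have : (0 : F) = 1 := hinj (h00.symm.trans h01)
    exact zero_ne_one this
  have hpair : ∀ (v w : Fin 4 → F), (∃ i, v i ≠ 0 ∧ w i = 0) → (∃ i, w i ≠ 0 ∧ v i = 0) →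
      LinearIndependent F ![v, w] := by
    intro v w ⟨i, hvi, hwi⟩ ⟨j, hwj, hvj⟩
    rw [LinearIndependent.pair_iff]
    intro a b hab
    constructor
    · have := congrFun hab i
      simp only [Pi.add_apply, Pi.smul_apply, smul_eq_mul, Pi.zero_apply, hwi, mul_zero,
        add_zero] at this
      exact (mul_eq_zero.mp this).resolve_right hvi
    · have := congrFun hab j
      simp only [Pi.add_apply, Pi.smul_apply, smul_eq_mul, Pi.zero_apply, hvj, mul_zero,
        zero_add] at this
      exact (mul_eq_zero.mp this).resolve_right hwj
  rcases ht0 with hk | hk | hk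
  · refine ⟨![g t0, -(f t0), 0, 0], ![h t0, 0, -(f t0), 0], ?_, ?_⟩
    · refine hpair _ _ ⟨1, ?_, ?_⟩ ⟨2, ?_, ?_⟩ <;> simp [hk]
    · intro t
      constructor
      · show f t * g t0 + g t * (-(f t0)) + h t * 0 - 0 = 0
        linear_combination (hall t t0).1
      · show f t * h t0 + g t * 0 + h t * (-(f t0)) - 0 = 0
        linear_combination (hall t t0).2.1
  · refine ⟨![g t0, -(f t0), 0, 0], ![0, h t0, -(g t0), 0], ?_, ?_⟩
    · refine hpair _ _ ⟨0, ?_, ?_⟩ ⟨2, ?_, ?_⟩ <;> simp [hk]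
    · intro t
      constructor
      · show f t * g t0 + g t * (-(f t0)) + h t * 0 - 0 = 0
        linear_combination (hall t t0).1
      · show f t * 0 + g t * h t0 + h t * (-(g t0)) - 0 = 0
        linear_combination (hall t t0).2.2
  · refine ⟨![h t0, 0, -(f t0), 0], ![0, h t0, -(g t0), 0], ?_, ?_⟩
    · refine hpair _ _ ⟨0, ?_, ?_⟩ ⟨1, ?_, ?_⟩ <;> simp [hk]
    · intro t
      constructor
      · show f t * h t0 + g t * 0 + h t * (-(f t0)) - 0 = 0
        linear_combination (hall t t0).2.1
      · show f t * 0 + g t * h t0 + h t * (-(g t0)) - 0 = 0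
        linear_combination (hall t t0).2.2

theorem stmt_10' (q : ℕ) (hq : q.Prime) (hF : Fintype.card F = q)
    (f g h : F → F) (hf0 : f 0 = 0) (hg0 : g 0 = 0) (hh0 : h 0 = 0)
    (hinj : Function.Injective (fun t => (f t, g t, h t)))
    (hstar : ∃ v : Fin 4 → F, v ≠ 0 ∧
      ∀ t : F, f t * v 0 + g t * v 1 + h t * v 2 - v 3 = 0)
    (hwide : IsWide F (carrierSet F f g h)) :
    ∃ v w : Fin 4 → F, LinearIndependent F ![v, w] ∧
      ∀ t : F, (f t * v 0 + g t * v 1 + h t * v 2 - v 3 = 0) ∧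
               (f t * w 0 + g t * w 1 + h t * w 2 - w 3 = 0) := by
  classical
  subst hF
  obtain ⟨v, hv0, hvplane⟩ := hstar
  have hv3 : v 3 = 0 := by
    have := hvplane 0
    rw [hf0, hg0, hh0] at this
    linear_combination -this
  have hall : ∀ t s : F, f t * g s - f s * g t = 0 ∧ f t * h s - f s * h t = 0 ∧
      g t * h s - g s * h t = 0 := by
    by_contra hno
    push_neg at hno
    obtain ⟨t1, t2, hmin⟩ := hno
    have hmin' : f t1 * g t2 - f t2 * g t1 ≠ 0 ∨ f t1 * h t2 - f t2 * h t1 ≠ 0 ∨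
        g t1 * h t2 - g t2 * h t1 ≠ 0 := by tauto
    set S := carrierSet F f g h with hSdef
    set z : F → (Fin 3 → F) := fun t => ![f t, g t, h t] with hzdef
    set c : Fin 3 → F := cross3 (z t1) (z t2) with hcdef
    have hcc0 : c 0 = g t1 * h t2 - h t1 * g t2 := rfl
    have hcc1 : c 1 = h t1 * f t2 - f t1 * h t2 := rfl
    have hcc2 : c 2 = f t1 * g t2 - g t1 * f t2 := rfl
    have hc : c ≠ 0 := by
      intro h0
      rcases hmin' with hm | hm | hm
      · exact hm (by have h2 : c 2 = 0 := congrFun h0 2; rw [hcc2] at h2; linear_combination h2)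
      · exact hm (by have h2 : c 1 = 0 := congrFun h0 1; rw [hcc1] at h2; linear_combination -h2)
      · exact hm (by have h2 : c 0 = 0 := congrFun h0 0; rw [hcc0] at h2; linear_combination h2)
    -- q is odd
    have ht12 : t1 ≠ t2 := by
      rintro rfl
      rcases hmin' with hm | hm | hm <;> exact hm (by ring)
    have ht1 : t1 ≠ 0 := by
      rintro rfl
      rcases hmin' with hm | hm | hm
      · exact hm (by rw [hf0, hg0]; ring)
      · exact hm (by rw [hf0, hh0]; ring)
      · exact hm (by rw [hg0, hh0]; ring)
    have ht2 : t2 ≠ 0 := by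
      rintro rfl
      rcases hmin' with hm | hm | hm
      · exact hm (by rw [hf0, hg0]; ring)
      · exact hm (by rw [hf0, hh0]; ring)
      · exact hm (by rw [hg0, hh0]; ring)
    have hq2 : Fintype.card F ≠ 2 := by
      intro h2
      have h1 : ∀ x : F, x ≠ 0 → x = 1 := by
        intro x hx
        have hp := FiniteField.pow_card_sub_one_eq_one x hx
        rw [h2] at hp
        simpa using hp
      exact ht12 ((h1 t1 ht1).trans (h1 t2 ht2).symm)
    obtain ⟨s, hs⟩ : ∃ s, Fintype.card F = 2 * s + 1 := by
      obtain ⟨k, hk⟩ := hq.odd_of_ne_two hq2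
      exact ⟨k, by omega⟩
    have hs1 : 1 ≤ s := by
      have := hq.two_le
      omega
    -- the kernel vector
    set u : Fin 3 → F := ![v 0, v 1, v 2] with hudef
    have hu0 : u ≠ 0 := by
      intro h0
      apply hv0
      funext i
      fin_cases i
      · exact congrFun h0 0
      · exact congrFun h0 1
      · exact congrFun h0 2
      · exact hv3
    have hudot : ∀ t, dot3 u (z t) = 0 := by
      intro t
      have he : dot3 u (z t) = v 0 * f t + v 1 * g t + v 2 * h t := rfl
      rw [he]
      linear_combination hvplane t + hv3
    obtain ⟨μ, hμ⟩ := perp2 (by rw [← hcdef]; exact hc) (hudot t1) (hudot t2)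
    rw [← hcdef] at hμ
    have hμ0 : μ ≠ 0 := fun h0 => hu0 (by rw [hμ, h0, zero_smul])
    have hcdot : ∀ t, dot3 c (z t) = 0 := by
      intro t
      have h1 : dot3 u (z t) = μ * dot3 c (z t) := by rw [hμ, dot3_smul_left]
      rw [hudot t] at h1
      exact (mul_eq_zero.mp h1.symm).resolve_left hμ0
    -- the point P0 and the width hypothesis
    set P0 : Projectivization F (Fin 3 → F) := Projectivization.mk F c hc with hP0def
    obtain ⟨aU, haU⟩ := (Projectivization.mk_eq_mk_iff F _ _ P0.rep_nonzero hc).mp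
      (Projectivization.mk_rep P0)
    -- dual basis functions
    have hcz : cross3 (z t1) (z t2) ≠ 0 := by rw [← hcdef]; exact hc
    obtain ⟨w1, hw1a, hw1b⟩ := dual_basis hcz 1 0
    obtain ⟨w2, hw2a, hw2b⟩ := dual_basis hcz 0 1
    set φ : F → F := fun t => dot3 w1 (z t) with hφdef
    set ψ : F → F := fun t => dot3 w2 (z t) with hψdef
    have hφ0 : φ 0 = 0 := by
      have he : φ 0 = w1 0 * f 0 + w1 1 * g 0 + w1 2 * h 0 := rfl
      rw [he, hf0, hg0, hh0]; ring
    have hψ0 : ψ 0 = 0 := by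
      have he : ψ 0 = w2 0 * f 0 + w2 1 * g 0 + w2 2 * h 0 := rfl
      rw [he, hf0, hg0, hh0]; ring
    -- representation of any combination in terms of φ and ψ
    have hrep : ∀ qv : Fin 3 → F, ∀ t,
        dot3 qv (z t) = dot3 qv (z t1) * φ t + dot3 qv (z t2) * ψ t := by
      intro qv t
      set w' : Fin 3 → F := qv - dot3 qv (z t1) • w1 - dot3 qv (z t2) • w2 with hw'def
      have hw'1 : dot3 w' (z t1) = 0 := by
        rw [hw'def, dot3_sub_left, dot3_sub_left, dot3_smul_left, dot3_smul_left,
          hw1a, hw2a]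
        ring
      have hw'2 : dot3 w' (z t2) = 0 := by
        rw [hw'def, dot3_sub_left, dot3_sub_left, dot3_smul_left, dot3_smul_left,
          hw1b, hw2b]
        ring
      obtain ⟨ν, hν⟩ := perp2 hcz hw'1 hw'2
      rw [← hcdef] at hν
      have h1 : dot3 w' (z t) = 0 := by
        rw [hν, dot3_smul_left, hcdot t, mul_zero]
      rw [hw'def, dot3_sub_left, dot3_sub_left, dot3_smul_left, dot3_smul_left] at h1
      rw [hφdef, hψdef]
      linear_combination h1
    -- membership in carrier set is bijectivity of the dot-combination
    have hSmem : ∀ Q : Projectivization F (Fin 3 → F),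
        Q ∈ S ↔ Function.Bijective (fun t => dot3 Q.rep (z t)) := by
      intro Q
      rfl
    have hP0nS : P0 ∉ S := by
      intro hmem
      rw [hSmem] at hmem
      have hzero : ∀ t, dot3 P0.rep (z t) = 0 := by
        intro t
        have : P0.rep = (aU : F) • c := haU.symm
        rw [this, dot3_smul_left, hcdot t, mul_zero]
      obtain ⟨t, ht⟩ := hmem.2 1
      simp only [hzero t] at ht
      exact zero_ne_one ht
    -- the set of lines
    set SL := {L : Projectivization F (Fin 3 → F) |
      (L.rep 0 * P0.rep 0 + L.rep 1 * P0.rep 1 + L.rep 2 * P0.rep 2 = 0) ∧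
      ∃ Q ∈ S, L.rep 0 * Q.rep 0 + L.rep 1 * Q.rep 1 + L.rep 2 * Q.rep 2 = 0} with hSLdef
    have hwidth : s + 1 ≤ Nat.card SL := by
      have hW := hwide P0
      unfold widthAt at hW
      have : (Fintype.card F + 2) / 2 = s + 1 := by omega
      rw [this] at hW
      exact hW
    haveI : Finite (Projectivization F (Fin 3 → F)) := Quotient.finite _
    have hSLfin : SL.Finite := Set.toFinite SL
    set T := hSLfin.toFinset with hTdef
    have hTcard : s + 1 ≤ T.card := by
      rw [hTdef, ← Set.ncard_eq_toFinset_card SL hSLfin, ← Nat.card_coe_set_eq]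
      exact hwidth
    -- choose witnesses
    have hex : ∀ L : {L // L ∈ T}, ∃ Q, Q ∈ S ∧
        L.1.rep 0 * Q.rep 0 + L.1.rep 1 * Q.rep 1 + L.1.rep 2 * Q.rep 2 = 0 := by
      intro L
      have := (hSLfin.mem_toFinset.mp L.2).2
      obtain ⟨Q, hQ1, hQ2⟩ := this
      exact ⟨Q, hQ1, hQ2⟩
    choose QF hQS hQdot using hex
    have hLP : ∀ L : {L // L ∈ T}, dot3 L.1.rep c = 0 := by
      intro L
      have h1 := (hSLfin.mem_toFinset.mp L.2).1
      have h2 : dot3 L.1.rep P0.rep = 0 := h1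
      have haU' : (aU : F) • c = P0.rep := by rw [← Units.smul_def]; exact haU
      rw [← haU', dot3_smul_right] at h2
      exact (mul_eq_zero.mp h2).resolve_left (Units.ne_zero aU)
    have hQdotd : ∀ L : {L // L ∈ T}, dot3 L.1.rep (QF L).rep = 0 := fun L => hQdot L
    -- the pair functions
    set A : {L // L ∈ T} → F := fun i => dot3 (QF i).rep (z t1) with hAdef
    set B : {L // L ∈ T} → F := fun i => dot3 (QF i).rep (z t2) with hBdef
    have hbij : ∀ i : {L // L ∈ T},
        Function.Bijective (fun t => A i * φ t + B i * ψ t) := by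
      intro i
      have hb := (hSmem (QF i)).mp (hQS i)
      have he : (fun t => A i * φ t + B i * ψ t) = fun t => dot3 (QF i).rep (z t) := by
        funext t
        exact (hrep (QF i).rep t).symm
      rw [he]
      exact hb
    have hpairne : ∀ i : {L // L ∈ T}, ¬(A i = 0 ∧ B i = 0) := by
      rintro i ⟨h1, h2⟩
      have hb := hbij i
      rw [h1, h2] at hb
      simp only [zero_mul, zero_add] at hb
      obtain ⟨t, ht⟩ := hb.2 (1 : F)
      exact absurd ht.symm one_ne_zero
    -- injectivity of directions
    have hnp : ∀ i j : {L // L ∈ T}, A i * B j = A j * B i → i = j := by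
      intro i j hdet
      obtain ⟨lam, hA, hB⟩ : ∃ lam : F, A i = lam * A j ∧ B i = lam * B j := by
        rcases not_and_or.mp (hpairne j) with hj | hj
        · exact ⟨A i / A j, by field_simp, by field_simp; linear_combination -hdet⟩
        · exact ⟨B i / B j, by field_simp; linear_combination hdet, by field_simp⟩
      have hlam0 : lam ≠ 0 := fun h0 => hpairne i ⟨by rw [hA, h0, zero_mul],
        by rw [hB, h0, zero_mul]⟩
      set wv : Fin 3 → F := (QF i).rep - lam • (QF j).rep with hwvdef
      have hwz1 : dot3 wv (z t1) = 0 := by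
        rw [hwvdef, dot3_sub_left, dot3_smul_left]
        linear_combination hA
      have hwz2 : dot3 wv (z t2) = 0 := by
        rw [hwvdef, dot3_sub_left, dot3_smul_left]
        linear_combination hB
      obtain ⟨ν, hν⟩ := perp2 hcz hwz1 hwz2
      rw [← hcdef] at hν
      have hLQj : dot3 i.1.rep (QF j).rep = 0 := by
        have h1 : dot3 i.1.rep wv = ν * dot3 i.1.rep c := by
          rw [show wv = ν • c from hν, dot3_smul_right]
        rw [hLP i, mul_zero] at h1
        rw [hwvdef, dot3_sub_right, dot3_smul_right, hQdotd i] at h1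
        have h2 : lam * dot3 i.1.rep (QF j).rep = 0 := by linear_combination -h1
        exact (mul_eq_zero.mp h2).resolve_left hlam0
      have hQjc : ∀ l : F, (QF j).rep ≠ l • c := by
        intro l hl
        have hmk : Projectivization.mk F (QF j).rep (QF j).rep_nonzero
            = Projectivization.mk F c hc := by
          rw [Projectivization.mk_eq_mk_iff']
          exact ⟨l, hl.symm⟩
        rw [Projectivization.mk_rep] at hmk
        have : QF j = P0 := by rw [hmk, hP0def]
        exact hP0nS (this ▸ hQS j)
      have hcr : cross3 c (QF j).rep ≠ 0 := indep_cross hc hQjc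
      obtain ⟨m1, hm1⟩ := perp2 hcr (hLP i) hLQj
      obtain ⟨m2, hm2⟩ := perp2 hcr (hLP j) (hQdotd j)
      have hm20 : m2 ≠ 0 := fun h0 => j.1.rep_nonzero (by rw [hm2, h0, zero_smul])
      have hmk2 : Projectivization.mk F i.1.rep i.1.rep_nonzero
          = Projectivization.mk F j.1.rep j.1.rep_nonzero := by
        rw [Projectivization.mk_eq_mk_iff']
        refine ⟨m1 / m2, ?_⟩
        rw [hm1, hm2, smul_smul]
        congr 1
        field_simp
      rw [Projectivization.mk_rep, Projectivization.mk_rep] at hmk2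
      exact Subtype.ext hmk2
    have hcardι : s + 1 ≤ Fintype.card {L // L ∈ T} := by
      rw [Fintype.card_coe]
      exact hTcard
    obtain ⟨γ, δ, hne0, hlin⟩ := my_pairs hq s hs hs1 φ ψ hφ0 hψ0 _ hcardι A B hbij hnp
    apply hne0
    have e1 : φ t1 = 1 := hw1a
    have e2 : ψ t1 = 0 := hw2a
    have e3 : φ t2 = 0 := hw1b
    have e4 : ψ t2 = 1 := hw2b
    constructor
    · have hh := hlin t1
      rw [e1, e2] at hh
      linear_combination hh
    · have hh := hlin t2
      rw [e3, e4] at hh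
      linear_combination hh
  exact my_case1 f g h hinj hall

end AuxPG

/-- Let `q` be a prime.  Every star flock of `PG(3,q)` whose critical cone is wide is linear: if all planes of the flock `F(f,g,h)` pass through a common point and the carrier of the critical cone is wide, then all the planes contain a common line. -/
theorem stmt_10 (q : ℕ) (hq : q.Prime) (F : Type) [Field F] [Fintype F] (hF : Fintype.card F = q)
    (f g h : F → F) (hf0 : f 0 = 0) (hg0 : g 0 = 0) (hh0 : h 0 = 0)
    (hinj : Function.Injective (fun t => (f t, g t, h t)))
    (hstar : ∃ v : Fin 4 → F, v ≠ 0 ∧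
      ∀ t : F, f t * v 0 + g t * v 1 + h t * v 2 - v 3 = 0)
    (hwide : IsWide F (carrierSet F f g h)) :
    ∃ v w : Fin 4 → F, LinearIndependent F ![v, w] ∧
      ∀ t : F, (f t * v 0 + g t * v 1 + h t * v 2 - v 3 = 0) ∧
               (f t * w 0 + g t * w 1 + h t * w 2 - w 3 = 0) := by
  exact stmt_10' q hq hF f g h hf0 hg0 hh0 hinj hstar hwide
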